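/- arXiv:1606.04768 — 3 statements merged into one kernel-verified Lean document; each statement's English description precedes it below -/
import Mathlib

section
/- Let $Q\subset\mathbb{R}^n$ be a cube, $\varrho\ge 0$, and $\delta>1$. For any measurable $h$ with $\frac{1}{|Q|}\int_Q |h|^\delta < \infty$, the normalized Luxemburg norm satisfies $\|h\|_{L(\log L)^\varrho, Q} \le C(\varrho) \max\{1, (\delta-1)^{-\varrho}\} (\frac{1}{|Q|}\int_Q |h(y)|^\delta dy)^{1/\delta}$, where $\|h\|_{L(\log L)^\varrho, Q} = \inf\{\lambda>0 : \frac{1}{|Q|}\int_Q \frac{|h(y)|}{\lambda}\log^\varrho(1+\frac{|h(y)|}{\lambda})dy \le 1\}$. -/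
open MeasureTheory ENNReal Set

noncomputable section

def cubeSet (n : ℕ) (c : Fin n → ℝ) (r : ℝ) : Set (Fin n → ℝ) :=
  {x | ∀ i, x i ∈ Set.Icc (c i - r) (c i + r)}

def IsCube {n : ℕ} (Q : Set (Fin n → ℝ)) : Prop :=
  ∃ c r, 0 < r ∧ Q = cubeSet n c r

/-- The normalized Luxemburg norm `‖h‖_{L(log L)^ϱ, Q}` associated with the
Young function `t log^ϱ(1+t)`. -/
def luxNorm {n : ℕ} (ρ : ℝ) (Q : Set (Fin n → ℝ)) (h : (Fin n → ℝ) → ℝ) : ℝ :=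
  sInf {lam : ℝ | 0 < lam ∧
    (⨍ y in Q, (|h y| / lam) * Real.log (1 + |h y| / lam) ^ ρ) ≤ 1}

/-- Basic measure-theoretic facts about cubes. -/
lemma cube_facts {n : ℕ} {Q : Set (Fin n → ℝ)} (hQ : IsCube Q) :
    MeasurableSet Q ∧ volume Q ≠ 0 ∧ volume Q ≠ ⊤ := by
  obtain ⟨c, r, hr, rfl⟩ := hQ
  have hQeq : cubeSet n c r = Set.pi Set.univ (fun i => Icc (c i - r) (c i + r)) := by
    ext x; simp only [cubeSet, Set.mem_setOf_eq, Set.mem_pi, Set.mem_univ, true_implies]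
  rw [hQeq]
  have hvol : volume (Set.pi Set.univ (fun i : Fin n => Icc (c i - r) (c i + r)))
      = ENNReal.ofReal (2 * r) ^ n := by
    rw [volume_pi_pi]
    have : ∀ i : Fin n, volume (Icc (c i - r) (c i + r)) = ENNReal.ofReal (2 * r) := by
      intro i; rw [Real.volume_Icc]; ring_nf
    simp only [this, Finset.prod_const, Finset.card_univ, Fintype.card_fin]
  refine ⟨MeasurableSet.univ_pi (fun i => measurableSet_Icc), ?_, ?_⟩
  · rw [hvol]
    exact pow_ne_zero _ (by simp [ENNReal.ofReal_eq_zero]; linarith)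
  · rw [hvol]
    exact ENNReal.pow_ne_top ENNReal.ofReal_ne_top

/-- The key pointwise inequality:
`u log^ρ(1+u) ≤ 2^ρ max(1,ρ^ρ) max(1,(δ-1)^{-ρ}) (u^δ + u)`. -/
lemma key_pointwise (ρ : ℝ) (hρ : 0 ≤ ρ) (δ : ℝ) (hδ : 1 < δ) {u : ℝ} (hu : 0 ≤ u) :
    u * Real.log (1 + u) ^ ρ ≤
      (2 ^ ρ * max 1 (ρ ^ ρ) * max 1 ((δ - 1) ^ (-ρ))) * (u ^ δ + u) := by
  set M1 := max 1 (ρ ^ ρ) with hM1def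
  set M2 := max 1 ((δ - 1) ^ (-ρ)) with hM2def
  have h2ρ : (1 : ℝ) ≤ 2 ^ ρ := by
    have := Real.rpow_le_rpow_of_exponent_le (by norm_num : (1:ℝ) ≤ 2) hρ
    simpa using this
  have hM1 : (1 : ℝ) ≤ M1 := le_max_left _ _
  have hM2 : (1 : ℝ) ≤ M2 := le_max_left _ _
  have hM1M2 : (1 : ℝ) ≤ M1 * M2 := by nlinarith
  have hK1 : (1 : ℝ) ≤ 2 ^ ρ * M1 * M2 := by nlinarith
  have hδ1 : (0 : ℝ) < δ - 1 := by linarith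
  have hd0 : 0 ≤ u ^ (δ - 1) := Real.rpow_nonneg hu _
  have main : Real.log (1 + u) ^ ρ ≤ (2 ^ ρ * M1 * M2) * (u ^ (δ - 1) + 1) := by
    rcases eq_or_lt_of_le hρ with hρ0 | hρ0
    · rw [← hρ0, Real.rpow_zero]
      have h20 : (2:ℝ) ^ (0:ℝ) = 1 := Real.rpow_zero 2
      rw [h20]
      nlinarith
    rcases le_total u 1 with hu1 | hu1
    · have hl : Real.log (1 + u) ≤ 1 := by
        have := Real.log_le_sub_one_of_pos (by linarith : (0:ℝ) < 1 + u); linarith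
      have hl0 : 0 ≤ Real.log (1 + u) := Real.log_nonneg (by linarith)
      have h1 : Real.log (1 + u) ^ ρ ≤ 1 := Real.rpow_le_one hl0 hl hρ
      nlinarith
    · have hu0 : (0 : ℝ) < u := lt_of_lt_of_le one_pos hu1
      set b := (ρ / (δ - 1)) * u ^ ((δ - 1) / ρ) with hbdef
      have hbn : 0 ≤ b :=
        mul_nonneg (div_nonneg hρ hδ1.le) (Real.rpow_nonneg hu _)
      have hlog : Real.log (1 + u) ≤ 1 + b := by
        have e1 : Real.log (1 + u) ≤ Real.log (2 * u) :=
          Real.log_le_log (by linarith) (by linarith)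
        have e2 : Real.log (2 * u) = Real.log 2 + Real.log u :=
          Real.log_mul two_ne_zero hu0.ne'
        have e3 : Real.log 2 ≤ 1 := by
          have := Real.log_le_sub_one_of_pos (by norm_num : (0:ℝ) < 2); linarith
        have e4 : Real.log u ≤ b := by
          have l1 : Real.log (u ^ ((δ - 1) / ρ)) = ((δ - 1) / ρ) * Real.log u :=
            Real.log_rpow hu0 _
          have l2 : Real.log (u ^ ((δ - 1) / ρ)) ≤ u ^ ((δ - 1) / ρ) := by
            have := Real.log_le_sub_one_of_pos (Real.rpow_pos_of_pos hu0 ((δ - 1) / ρ))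
            linarith
          have l3 : ((δ - 1) / ρ) * Real.log u ≤ u ^ ((δ - 1) / ρ) := by
            rw [← l1]; exact l2
          calc Real.log u = (ρ / (δ - 1)) * (((δ - 1) / ρ) * Real.log u) := by
                field_simp
            _ ≤ (ρ / (δ - 1)) * u ^ ((δ - 1) / ρ) := by
                apply mul_le_mul_of_nonneg_left l3 (div_nonneg hρ hδ1.le)
        linarith
      have step2 : Real.log (1 + u) ^ ρ ≤ (1 + b) ^ ρ :=
        Real.rpow_le_rpow (Real.log_nonneg (by linarith)) hlog hρ
      have step3 : (1 + b) ^ ρ ≤ 2 ^ ρ * (max 1 b) ^ ρ := by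
        have hle : (1 : ℝ) + b ≤ 2 * max 1 b := by
          have h1 := le_max_left (1:ℝ) b; have h2 := le_max_right (1:ℝ) b; linarith
        calc (1 + b) ^ ρ ≤ (2 * max 1 b) ^ ρ :=
              Real.rpow_le_rpow (by linarith) hle hρ
          _ = 2 ^ ρ * (max 1 b) ^ ρ :=
              Real.mul_rpow (by norm_num) (le_trans zero_le_one (le_max_left _ _))
      have step4 : (max 1 b) ^ ρ ≤ 1 + b ^ ρ := by
        rcases le_total b 1 with hb1 | hb1
        · rw [max_eq_left hb1, Real.one_rpow]
          have := Real.rpow_nonneg hbn ρ; linarith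
        · rw [max_eq_right hb1]; linarith
      have step5 : b ^ ρ = (ρ ^ ρ * (δ - 1) ^ (-ρ)) * u ^ (δ - 1) := by
        rw [hbdef, Real.mul_rpow (div_nonneg hρ hδ1.le) (Real.rpow_nonneg hu _)]
        have e1 : (u ^ ((δ - 1) / ρ)) ^ ρ = u ^ (δ - 1) := by
          rw [← Real.rpow_mul hu, div_mul_cancel₀ _ hρ0.ne']
        have e2 : (ρ / (δ - 1)) ^ ρ = ρ ^ ρ * (δ - 1) ^ (-ρ) := by
          rw [Real.div_rpow hρ hδ1.le, Real.rpow_neg hδ1.le, div_eq_mul_inv]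
        rw [e1, e2]
      have step6 : b ^ ρ ≤ M1 * M2 * u ^ (δ - 1) := by
        rw [step5]
        apply mul_le_mul_of_nonneg_right _ hd0
        have hρρ : 0 ≤ ρ ^ ρ := Real.rpow_nonneg hρ _
        have hδρ : 0 ≤ (δ - 1) ^ (-ρ) := Real.rpow_nonneg hδ1.le _
        exact mul_le_mul (le_max_right _ _) (le_max_right _ _) hδρ
          (le_trans zero_le_one hM1)
      have h2ρ0 : (0:ℝ) ≤ 2 ^ ρ := by linarith
      calc Real.log (1 + u) ^ ρ ≤ 2 ^ ρ * (max 1 b) ^ ρ := le_trans step2 step3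
        _ ≤ 2 ^ ρ * (1 + b ^ ρ) := mul_le_mul_of_nonneg_left step4 h2ρ0
        _ ≤ 2 ^ ρ * (1 + M1 * M2 * u ^ (δ - 1)) :=
            mul_le_mul_of_nonneg_left (by linarith) h2ρ0
        _ ≤ 2 ^ ρ * (M1 * M2 + M1 * M2 * u ^ (δ - 1)) :=
            mul_le_mul_of_nonneg_left (by nlinarith) h2ρ0
        _ = (2 ^ ρ * M1 * M2) * (u ^ (δ - 1) + 1) := by ring
  rcases hu.eq_or_lt with hu0 | hu0
  · rw [← hu0]
    have : (0:ℝ) ^ δ = 0 := Real.zero_rpow (by linarith : δ ≠ 0)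
    simp [this]
  · have h7 : u ^ δ = u ^ (δ - 1) * u := by
      rw [← Real.rpow_add_one hu0.ne' (δ - 1), sub_add_cancel]
    have := mul_le_mul_of_nonneg_left main hu
    calc u * Real.log (1 + u) ^ ρ
        ≤ u * ((2 ^ ρ * M1 * M2) * (u ^ (δ - 1) + 1)) := this
      _ = (2 ^ ρ * M1 * M2) * (u ^ (δ - 1) * u + u) := by ring
      _ = (2 ^ ρ * M1 * M2) * (u ^ δ + u) := by rw [← h7]

/-- `‖h‖_{L(log L)^ϱ, Q} ≤ C(ϱ) max{1, (δ-1)^{-ϱ}} (⨍_Q |h|^δ)^{1/δ}`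
for `δ > 1`. -/
theorem statement3 (ρ : ℝ) (hρ : 0 ≤ ρ) :
    ∃ C : ℝ, 0 < C ∧
      ∀ (n : ℕ) (Q : Set (Fin n → ℝ)), IsCube Q →
        ∀ (δ : ℝ), 1 < δ →
          ∀ h : (Fin n → ℝ) → ℝ, Measurable h →
            IntegrableOn (fun y => |h y| ^ δ) Q volume →
            luxNorm ρ Q h ≤
              C * max 1 ((δ - 1) ^ (-ρ)) * (⨍ y in Q, |h y| ^ δ) ^ (1 / δ) := by
  have hM1 : (1 : ℝ) ≤ max 1 (ρ ^ ρ) := le_max_left _ _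
  have h2ρ : (1 : ℝ) ≤ 2 ^ ρ := by
    have := Real.rpow_le_rpow_of_exponent_le (by norm_num : (1:ℝ) ≤ 2) hρ
    simpa using this
  refine ⟨2 * 2 ^ ρ * max 1 (ρ ^ ρ), by nlinarith, ?_⟩
  intro n Q hQ δ hδ h hmeas hint
  obtain ⟨hQm, hV0, hVtop⟩ := cube_facts hQ
  have hM2 : (1 : ℝ) ≤ max 1 ((δ - 1) ^ (-ρ)) := le_max_left _ _
  have hδ0 : (0 : ℝ) < δ := lt_trans one_pos hδ
  have hV : 0 < (volume Q).toReal := ENNReal.toReal_pos hV0 hVtop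
  set M1 := max 1 (ρ ^ ρ) with hM1def
  set M2 := max 1 ((δ - 1) ^ (-ρ)) with hM2def
  set I := ⨍ y in Q, |h y| ^ δ with hIdef
  have hInn : 0 ≤ I := by
    rw [hIdef, setAverage_eq, smul_eq_mul]
    exact mul_nonneg (by positivity) (integral_nonneg fun y => Real.rpow_nonneg (abs_nonneg _) _)
  have hbdd : BddBelow {lam : ℝ | 0 < lam ∧
      (⨍ y in Q, (|h y| / lam) * Real.log (1 + |h y| / lam) ^ ρ) ≤ 1} :=
    ⟨0, fun x hx => hx.1.le⟩
  rcases hInn.eq_or_lt with hI0 | hIpos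
  · -- degenerate case: the average of `|h|^δ` is zero, hence `h = 0` a.e. on `Q`
    have hi0 : ∫ y in Q, |h y| ^ δ = 0 := by
      have := hIdef
      rw [setAverage_eq, smul_eq_mul] at this
      rw [← hI0] at this
      have hVne : ((volume Q).toReal)⁻¹ ≠ 0 := by positivity
      rcases mul_eq_zero.1 this.symm with hc | hc
      · exact absurd hc hVne
      · exact hc
    have hz : (fun y => |h y| ^ δ) =ᵐ[volume.restrict Q] 0 := by
      rw [← integral_eq_zero_iff_of_nonneg_ae
        (Filter.Eventually.of_forall fun y => Real.rpow_nonneg (abs_nonneg _) _) hint]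
      exact hi0
    have hz' : ∀ᵐ y ∂(volume.restrict Q), h y = 0 := by
      filter_upwards [hz] with y hy
      have : |h y| ^ δ = 0 := hy
      rw [Real.rpow_eq_zero_iff_of_nonneg (abs_nonneg _)] at this
      exact abs_eq_zero.1 this.1
    have hlux : luxNorm ρ Q h ≤ 0 := by
      apply _root_.le_of_forall_pos_le_add
      intro ε hε
      have hmem : ε ∈ {lam : ℝ | 0 < lam ∧
          (⨍ y in Q, (|h y| / lam) * Real.log (1 + |h y| / lam) ^ ρ) ≤ 1} := by
        refine ⟨hε, ?_⟩
        have : (⨍ y in Q, (|h y| / ε) * Real.log (1 + |h y| / ε) ^ ρ)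
            = ⨍ _y in Q, (0 : ℝ) := by
          apply average_congr
          filter_upwards [hz'] with y hy
          simp [hy]
        rw [this]
        simp
      have := csInf_le hbdd hmem
      rw [luxNorm]
      linarith
    have hR0 : I ^ (1 / δ) = 0 := by
      rw [← hI0, Real.zero_rpow (by positivity : 1 / δ ≠ 0)]
    calc luxNorm ρ Q h ≤ 0 := hlux
      _ = 2 * 2 ^ ρ * M1 * M2 * (I ^ (1 / δ)) := by rw [hR0]; ring
  · -- main case
    set A := I ^ (1 / δ) with hAdef
    have hA : 0 < A := Real.rpow_pos_of_pos hIpos _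
    have hAδ : A ^ δ = I := by
      rw [hAdef, ← Real.rpow_mul hInn, one_div, inv_mul_cancel₀ hδ0.ne', Real.rpow_one]
    set K := 2 ^ ρ * M1 * M2 with hKdef
    have hM1M2 : (1 : ℝ) ≤ M1 * M2 := by nlinarith
    have hK1 : (1 : ℝ) ≤ K := by nlinarith
    set lam := 2 * 2 ^ ρ * M1 * M2 * A with hlamdef
    have hlam0 : 0 < lam := by
      have : (0:ℝ) < 2 * 2 ^ ρ * M1 * M2 := by nlinarith
      exact mul_pos this hA
    have hlam2KA : lam = 2 * K * A := by rw [hlamdef, hKdef]; ring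
    -- integrability of |h| on Q
    have hInt1 : IntegrableOn (fun y => |h y|) Q volume := by
      have hconst : IntegrableOn (fun _ => (1:ℝ)) Q volume :=
        integrableOn_const hVtop
      apply Integrable.mono' (hconst.add hint)
        (hmeas.abs.aestronglyMeasurable)
      apply Filter.Eventually.of_forall
      intro y
      have hn : ‖|h y|‖ = |h y| := by
        rw [Real.norm_eq_abs, abs_abs]
      rw [hn]
      rcases le_total (|h y|) 1 with hy | hy
      · have := Real.rpow_nonneg (abs_nonneg (h y)) δ
        simp only [Pi.add_apply]
        linarith
      · have h1 : |h y| ^ (1:ℝ) ≤ |h y| ^ δ :=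
          Real.rpow_le_rpow_of_exponent_le hy hδ.le
        rw [Real.rpow_one] at h1
        simp only [Pi.add_apply]
        linarith
    -- Jensen: the average of |h| is at most A
    set J := ⨍ y in Q, |h y| with hJdef
    have hJnn : 0 ≤ J := by
      rw [hJdef, setAverage_eq, smul_eq_mul]
      exact mul_nonneg (by positivity) (integral_nonneg fun y => abs_nonneg _)
    have hJδ : J ^ δ ≤ I := by
      have inst1 : IsFiniteMeasure (volume.restrict Q) :=
        ⟨by rw [Measure.restrict_apply_univ]; exact lt_top_iff_ne_top.2 hVtop⟩
      have inst2 : NeZero (volume.restrict Q) := by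
        refine ⟨fun h0 => hV0 ?_⟩
        rw [← Measure.restrict_apply_univ, h0]; simp
      have hcont : ContinuousOn (fun x : ℝ => x ^ δ) (Ici 0) :=
        fun x _ => (Real.continuousAt_rpow_const x δ (Or.inr hδ0.le)).continuousWithinAt
      have := (convexOn_rpow hδ.le).map_average_le hcont isClosed_Ici
        (Filter.Eventually.of_forall fun y => abs_nonneg (h y)) hInt1 hint
      exact this
    have hJA : J ≤ A := by
      have hmono : (J ^ δ) ^ (1 / δ) ≤ I ^ (1 / δ) :=
        Real.rpow_le_rpow (Real.rpow_nonneg hJnn _) hJδ (by positivity)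
      rwa [← Real.rpow_mul hJnn, mul_one_div, div_self hδ0.ne', Real.rpow_one] at hmono
    -- pointwise bound and integrability of the majorant
    have hg1 : IntegrableOn (fun y => (|h y| / lam) ^ δ) Q volume := by
      have heq : (fun y => (|h y| / lam) ^ δ) = fun y => (1 / lam ^ δ) * |h y| ^ δ := by
        funext y
        rw [Real.div_rpow (abs_nonneg _) hlam0.le]
        ring
      rw [heq]
      exact hint.const_mul _
    have hg2 : IntegrableOn (fun y => |h y| / lam) Q volume := hInt1.div_const lam
    have hgint : IntegrableOn
        (fun y => K * ((|h y| / lam) ^ δ + |h y| / lam)) Q volume :=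
      (hg1.add hg2).const_mul K
    have hmono : ∫ y in Q, (|h y| / lam) * Real.log (1 + |h y| / lam) ^ ρ
        ≤ ∫ y in Q, K * ((|h y| / lam) ^ δ + |h y| / lam) := by
      apply integral_mono_of_nonneg
      · apply Filter.Eventually.of_forall
        intro y
        have h1 : 0 ≤ |h y| / lam := div_nonneg (abs_nonneg _) hlam0.le
        have h2 : 0 ≤ Real.log (1 + |h y| / lam) := Real.log_nonneg (by linarith)
        exact mul_nonneg h1 (Real.rpow_nonneg h2 _)
      · exact hgint
      · exact Filter.Eventually.of_forall fun y =>
          key_pointwise ρ hρ δ hδ (div_nonneg (abs_nonneg _) hlam0.le)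
    -- compute the right-hand integral
    have he1 : ∫ y in Q, (|h y| / lam) ^ δ = (1 / lam ^ δ) * ∫ y in Q, |h y| ^ δ := by
      rw [← integral_const_mul]
      apply integral_congr_ae
      apply Filter.Eventually.of_forall
      intro y
      show (|h y| / lam) ^ δ = 1 / lam ^ δ * |h y| ^ δ
      rw [Real.div_rpow (abs_nonneg _) hlam0.le]
      ring
    have he2 : ∫ y in Q, |h y| / lam = (1 / lam) * ∫ y in Q, |h y| := by
      rw [← integral_const_mul]
      apply integral_congr_ae
      apply Filter.Eventually.of_forall
      intro y
      show |h y| / lam = 1 / lam * |h y|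
      ring
    have hsplit : ∫ y in Q, K * ((|h y| / lam) ^ δ + |h y| / lam)
        = K * ((1 / lam ^ δ) * (∫ y in Q, |h y| ^ δ) + (1 / lam) * ∫ y in Q, |h y|) := by
      rw [integral_const_mul, integral_add hg1 hg2, he1, he2]
    -- the average of the Young function at lam is at most 1
    have havg : (⨍ y in Q, (|h y| / lam) * Real.log (1 + |h y| / lam) ^ ρ) ≤ 1 := by
      have hEI : ∫ y in Q, |h y| ^ δ = (volume Q).toReal * I := by
        rw [hIdef, setAverage_eq, smul_eq_mul, measureReal_def, ← mul_assoc,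
          mul_inv_cancel₀ hV.ne', one_mul]
      have hEJ : ∫ y in Q, |h y| = (volume Q).toReal * J := by
        rw [hJdef, setAverage_eq, smul_eq_mul, measureReal_def, ← mul_assoc,
          mul_inv_cancel₀ hV.ne', one_mul]
      rw [setAverage_eq, smul_eq_mul]
      have hle : ((volume Q).toReal)⁻¹ *
          ∫ y in Q, (|h y| / lam) * Real.log (1 + |h y| / lam) ^ ρ
          ≤ ((volume Q).toReal)⁻¹ *
          (K * ((1 / lam ^ δ) * (∫ y in Q, |h y| ^ δ) + (1 / lam) * ∫ y in Q, |h y|)) := by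
        apply mul_le_mul_of_nonneg_left _ (by positivity)
        rw [← hsplit]; exact hmono
      refine le_trans hle ?_
      rw [hEI, hEJ]
      have hVsimp : ((volume Q).toReal)⁻¹ *
          (K * ((1 / lam ^ δ) * ((volume Q).toReal * I) + (1 / lam) * ((volume Q).toReal * J)))
          = K * (I / lam ^ δ + J / lam) := by
        field_simp
      rw [hVsimp]
      -- now the purely arithmetic part
      have hAlam : A / lam ≤ 1 := by
        rw [div_le_one hlam0, hlam2KA]
        nlinarith
      have hAlam0 : 0 < A / lam := div_pos hA hlam0
      have hIl : I / lam ^ δ ≤ A / lam := by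
        have he : I / lam ^ δ = (A / lam) ^ δ := by
          rw [Real.div_rpow hA.le hlam0.le, hAδ]
        rw [he]
        have := Real.rpow_le_rpow_of_exponent_ge hAlam0 hAlam hδ.le
        rwa [Real.rpow_one] at this
      have hJl : J / lam ≤ A / lam := by gcongr
      have hfinal : K * (I / lam ^ δ + J / lam) ≤ K * (2 * (A / lam)) := by
        apply mul_le_mul_of_nonneg_left _ (by linarith : (0:ℝ) ≤ K)
        linarith
      refine le_trans hfinal (le_of_eq ?_)
      rw [hlam2KA]
      have hK0 : K ≠ 0 := by positivity
      field_simp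
    -- conclude via csInf
    have hmem : lam ∈ {lam : ℝ | 0 < lam ∧
        (⨍ y in Q, (|h y| / lam) * Real.log (1 + |h y| / lam) ^ ρ) ≤ 1} :=
      ⟨hlam0, havg⟩
    have := csInf_le hbdd hmem
    rw [luxNorm]
    calc sInf {lam : ℝ | 0 < lam ∧
        (⨍ y in Q, (|h y| / lam) * Real.log (1 + |h y| / lam) ^ ρ) ≤ 1} ≤ lam := this
      _ = 2 * 2 ^ ρ * M1 * M2 * I ^ (1 / δ) := by rw [hlamdef, hAdef]
end
end

section
/- Let $K(x;y_1,y_2)$ satisfy the bilinear size condition $|K(x;y_1,y_2)| \le A (|x-y_1|+|x-y_2|)^{-2n}$ for $(x,y_1,y_2)$ with $x\ne y_j$ for some $j$. For $\epsilon>0$ define $A_\epsilon(f_1,f_2)(x) = \int_{\max_j|x-y_j|>\epsilon,\ \min_j|x-y_j|\le\epsilon} |K(x;y_1,y_2)||f_1(y_1)f_2(y_2)|\,dy_1dy_2$. Then $A_\epsilon(f_1,f_2)(x) \le C(n) A\, Mf_1(x)\, Mf_2(x)$ for all $x$ and $\epsilon>0$, where $M$ is the Hardy--Littlewood maximal operator.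 -/
open MeasureTheory ENNReal Set

noncomputable section

def avgE {n : ℕ} (Q : Set (Fin n → ℝ)) (f : (Fin n → ℝ) → ℝ≥0∞) : ℝ≥0∞ :=
  (∫⁻ x in Q, f x) / volume Q

/-- The (uncentered, over cubes) Hardy–Littlewood maximal operator of a real
function. -/
def hlMaxR {n : ℕ} (f : (Fin n → ℝ) → ℝ) (x : Fin n → ℝ) : ℝ≥0∞ :=
  ⨆ Q : {Q : Set (Fin n → ℝ) // IsCube Q ∧ x ∈ Q},
    avgE Q.1 fun y => ENNReal.ofReal |f y|

/-- The truncated bilinear integral over the region where at least one `y_j`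
is within distance `ε` of `x` and at least one is beyond distance `ε`. -/
def truncRegionInt {n : ℕ} (K : (Fin n → ℝ) → (Fin n → ℝ) → (Fin n → ℝ) → ℝ)
    (f₁ f₂ : (Fin n → ℝ) → ℝ) (ε : ℝ) (x : Fin n → ℝ) : ℝ≥0∞ :=
  ∫⁻ y in {y : (Fin n → ℝ) × (Fin n → ℝ) |
      ε < max (dist x y.1) (dist x y.2) ∧ min (dist x y.1) (dist x y.2) ≤ ε},
    ENNReal.ofReal (|K x y.1 y.2| * |f₁ y.1| * |f₂ y.2|)

lemma cube_eq_ball {n : ℕ} (c : Fin n → ℝ) {r : ℝ} (hr : 0 ≤ r) :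
    cubeSet n c r = Metric.closedBall c r := by
  ext y
  simp only [cubeSet, mem_setOf_eq, Metric.mem_closedBall, dist_pi_le_iff hr, Set.mem_Icc]
  constructor
  · intro h i
    rw [Real.dist_eq, abs_le]
    constructor <;> linarith [(h i).1, (h i).2]
  · intro h i
    have := h i
    rw [Real.dist_eq, abs_le] at this
    constructor <;> linarith [this.1, this.2]

lemma vol_cube {n : ℕ} (c : Fin n → ℝ) (r : ℝ) :
    volume (cubeSet n c r) = (ENNReal.ofReal (2 * r)) ^ n := by
  have : cubeSet n c r = Set.Icc (fun i => c i - r) (fun i => c i + r) := by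
    ext y; simp [cubeSet, Set.mem_Icc, Pi.le_def, forall_and]
  rw [this, Real.volume_Icc_pi]
  have : ∀ i : Fin n, c i + r - (c i - r) = 2 * r := fun i => by ring
  simp [this]

lemma lintegral_ball_le {n : ℕ} (f : (Fin n → ℝ) → ℝ) (x : Fin n → ℝ) {r : ℝ} (hr : 0 < r) :
    (∫⁻ y in Metric.closedBall x r, ENNReal.ofReal |f y|) ≤
      hlMaxR f x * (ENNReal.ofReal (2 * r)) ^ n := by
  rw [← cube_eq_ball x hr.le]
  have hv : volume (cubeSet n x r) = (ENNReal.ofReal (2 * r)) ^ n := vol_cube x r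
  have hvne : volume (cubeSet n x r) ≠ 0 := by
    rw [hv]; positivity
  have hvnt : volume (cubeSet n x r) ≠ ⊤ := by
    rw [hv]; exact pow_ne_top ofReal_ne_top
  have hmem : x ∈ cubeSet n x r := by
    intro i; simp only [Set.mem_Icc]; constructor <;> linarith
  have h1 : (∫⁻ y in cubeSet n x r, ENNReal.ofReal |f y|) =
      avgE (cubeSet n x r) (fun y => ENNReal.ofReal |f y|) * volume (cubeSet n x r) := by
    rw [avgE, ENNReal.div_mul_cancel hvne hvnt]
  rw [h1, hv]
  gcongr
  exact le_iSup (fun Q : {Q : Set (Fin n → ℝ) // IsCube Q ∧ x ∈ Q} =>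
    avgE Q.1 fun y => ENNReal.ofReal |f y|) ⟨cubeSet n x r, ⟨x, r, hr, rfl⟩, hmem⟩

lemma exists_dyadic {ε t : ℝ} (hε : 0 < ε) (ht : ε < t) :
    ∃ k : ℕ, 2 ^ k * ε < t ∧ t ≤ 2 ^ (k + 1) * ε := by
  have h1 : ∃ m : ℕ, t ≤ 2 ^ (m + 1) * ε := by
    obtain ⟨m, hm⟩ := pow_unbounded_of_one_lt (t / ε) (by norm_num : (1 : ℝ) < 2)
    rw [div_lt_iff₀ hε] at hm
    refine ⟨m, le_of_lt (hm.trans_le ?_)⟩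
    have : (2 : ℝ) ^ m ≤ 2 ^ (m + 1) := by
      apply pow_le_pow_right₀ (by norm_num) (by omega)
    nlinarith
  classical
  refine ⟨Nat.find h1, ?_, Nat.find_spec h1⟩
  rcases Nat.eq_zero_or_pos (Nat.find h1) with h0 | hpos
  · rw [h0]; simpa using ht
  · obtain ⟨m, hm⟩ := Nat.exists_eq_succ_of_ne_zero hpos.ne'
    have hmin := Nat.find_min h1 (m := m) (by omega)
    push_neg at hmin
    rw [hm]
    exact hmin

lemma prod_lintegral_mul {n : ℕ} (s t : Set (Fin n → ℝ))
    (g₁ g₂ : (Fin n → ℝ) → ℝ≥0∞) (h₁ : Measurable g₁) (h₂ : Measurable g₂) :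
    ∫⁻ y in s ×ˢ t, g₁ y.1 * g₂ y.2 = (∫⁻ y in s, g₁ y) * ∫⁻ y in t, g₂ y := by
  rw [Measure.volume_eq_prod, ← Measure.prod_restrict,
    lintegral_prod_mul h₁.aemeasurable h₂.aemeasurable]

lemma annulus_bound {n : ℕ} {A : ℝ} (hA : 0 ≤ A)
    (K : (Fin n → ℝ) → (Fin n → ℝ) → (Fin n → ℝ) → ℝ)
    (hK : ∀ x y₁ y₂ : Fin n → ℝ, (x ≠ y₁ ∨ x ≠ y₂) →
      |K x y₁ y₂| ≤ A * (dist x y₁ + dist x y₂) ^ (-(2 * n : ℝ)))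
    (f₁ f₂ : (Fin n → ℝ) → ℝ) (hf₁ : Measurable f₁) (hf₂ : Measurable f₂)
    {ε : ℝ} (hε : 0 < ε) (x : Fin n → ℝ) (k : ℕ) :
    (∫⁻ y in {y : (Fin n → ℝ) × (Fin n → ℝ) |
        2 ^ k * ε < max (dist x y.1) (dist x y.2) ∧
        max (dist x y.1) (dist x y.2) ≤ 2 ^ (k + 1) * ε ∧
        min (dist x y.1) (dist x y.2) ≤ ε},
      ENNReal.ofReal (|K x y.1 y.2| * |f₁ y.1| * |f₂ y.2|)) ≤
      ENNReal.ofReal (2 * A * 8 ^ n * ((1 / 2 : ℝ) ^ n) ^ k) *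
        (hlMaxR f₁ x * hlMaxR f₂ x) := by
  set g₁ : (Fin n → ℝ) → ℝ≥0∞ := fun y => ENNReal.ofReal |f₁ y| with hg₁
  set g₂ : (Fin n → ℝ) → ℝ≥0∞ := fun y => ENNReal.ofReal |f₂ y| with hg₂
  have hmg₁ : Measurable g₁ := ENNReal.measurable_ofReal.comp hf₁.abs
  have hmg₂ : Measurable g₂ := ENNReal.measurable_ofReal.comp hf₂.abs
  set B : ℝ := A * ((2 : ℝ) ^ k * ε) ^ (-(2 * n : ℝ)) with hBdef
  have hbase : (0 : ℝ) < 2 ^ k * ε := by positivity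
  have hB : 0 ≤ B := mul_nonneg hA (Real.rpow_nonneg hbase.le _)
  set R : ℝ := 2 ^ (k + 1) * ε with hRdef
  have hR : 0 < R := by positivity
  set S : Set ((Fin n → ℝ) × (Fin n → ℝ)) :=
    {y | 2 ^ k * ε < max (dist x y.1) (dist x y.2) ∧
        max (dist x y.1) (dist x y.2) ≤ 2 ^ (k + 1) * ε ∧
        min (dist x y.1) (dist x y.2) ≤ ε} with hSdef
  have hSm : MeasurableSet S := by
    have hdmax : Measurable (fun y : (Fin n → ℝ) × (Fin n → ℝ) =>
        max (dist x y.1) (dist x y.2)) :=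
      ((continuous_const.dist continuous_fst).max
        (continuous_const.dist continuous_snd)).measurable
    have hdmin : Measurable (fun y : (Fin n → ℝ) × (Fin n → ℝ) =>
        min (dist x y.1) (dist x y.2)) :=
      ((continuous_const.dist continuous_fst).min
        (continuous_const.dist continuous_snd)).measurable
    rw [hSdef]
    simp only [Set.setOf_and]
    exact (measurableSet_lt measurable_const hdmax).inter
      ((measurableSet_le hdmax measurable_const).inter
        (measurableSet_le hdmin measurable_const))
  -- Step 1: pointwise bound
  have step1 : (∫⁻ y in S, ENNReal.ofReal (|K x y.1 y.2| * |f₁ y.1| * |f₂ y.2|)) ≤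
      ∫⁻ y in S, ENNReal.ofReal B * (g₁ y.1 * g₂ y.2) := by
    apply setLIntegral_mono' hSm
    intro y hy
    obtain ⟨h1, _, _⟩ := hy
    have hmaxpos : 0 < max (dist x y.1) (dist x y.2) := lt_trans hbase h1
    have hne : x ≠ y.1 ∨ x ≠ y.2 := by
      rcases lt_max_iff.1 hmaxpos with h | h
      · exact Or.inl (dist_pos.1 h)
      · exact Or.inr (dist_pos.1 h)
    have hsum : 2 ^ k * ε ≤ dist x y.1 + dist x y.2 := by
      refine le_of_lt (h1.trans_le (max_le ?_ ?_))
      · exact le_add_of_nonneg_right dist_nonneg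
      · exact le_add_of_nonneg_left dist_nonneg
    have hker : |K x y.1 y.2| ≤ B := by
      refine (hK x y.1 y.2 hne).trans ?_
      exact mul_le_mul_of_nonneg_left
        (Real.rpow_le_rpow_of_nonpos hbase hsum (neg_nonpos.2 (by positivity))) hA
    calc ENNReal.ofReal (|K x y.1 y.2| * |f₁ y.1| * |f₂ y.2|)
        ≤ ENNReal.ofReal (B * |f₁ y.1| * |f₂ y.2|) := by
          apply ENNReal.ofReal_le_ofReal
          apply mul_le_mul_of_nonneg_right _ (abs_nonneg _)
          exact mul_le_mul_of_nonneg_right hker (abs_nonneg _)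
      _ = ENNReal.ofReal B * (g₁ y.1 * g₂ y.2) := by
          rw [ENNReal.ofReal_mul (mul_nonneg hB (abs_nonneg _)),
            ENNReal.ofReal_mul hB, mul_assoc]
  -- Step 2: pull out constant
  rw [lintegral_const_mul' _ _ ofReal_ne_top] at step1
  -- Step 3: cover S by a union of products
  have hcover : S ⊆ (Metric.closedBall x ε ×ˢ Metric.closedBall x R) ∪
      (Metric.closedBall x R ×ˢ Metric.closedBall x ε) := by
    rintro y ⟨_, h2, h3⟩
    have hd1 : dist x y.1 ≤ R := le_trans (le_max_left _ _) h2
    have hd2 : dist x y.2 ≤ R := le_trans (le_max_right _ _) h2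
    rcases le_or_gt (dist x y.1) ε with h | h
    · exact Or.inl ⟨Metric.mem_closedBall.2 (by rwa [dist_comm]),
        Metric.mem_closedBall.2 (by rwa [dist_comm])⟩
    · have hd2' : dist x y.2 ≤ ε := by
        rcases min_le_iff.1 h3 with h' | h'
        · exact absurd h' (not_le.2 h)
        · exact h'
      exact Or.inr ⟨Metric.mem_closedBall.2 (by rwa [dist_comm]),
        Metric.mem_closedBall.2 (by rwa [dist_comm])⟩
  -- Step 4: split and bound each product
  have hsplit : (∫⁻ y in S, g₁ y.1 * g₂ y.2) ≤
      (hlMaxR f₁ x * (ENNReal.ofReal (2 * ε)) ^ n) *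
        (hlMaxR f₂ x * (ENNReal.ofReal (2 * R)) ^ n) +
      (hlMaxR f₁ x * (ENNReal.ofReal (2 * R)) ^ n) *
        (hlMaxR f₂ x * (ENNReal.ofReal (2 * ε)) ^ n) := by
    refine (lintegral_mono_set hcover).trans ((lintegral_union_le _ _ _).trans ?_)
    apply add_le_add
    · rw [prod_lintegral_mul _ _ _ _ hmg₁ hmg₂]
      exact mul_le_mul' (lintegral_ball_le f₁ x hε) (lintegral_ball_le f₂ x hR)
    · rw [prod_lintegral_mul _ _ _ _ hmg₁ hmg₂]
      exact mul_le_mul' (lintegral_ball_le f₁ x hR) (lintegral_ball_le f₂ x hε)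
  refine step1.trans ((mul_le_mul_right hsplit _).trans (le_of_eq ?_))
  have hconst : ENNReal.ofReal B *
      (2 * ((ENNReal.ofReal (2 * ε)) ^ n * (ENNReal.ofReal (2 * R)) ^ n)) =
      ENNReal.ofReal (B * (2 * ((2 * ε) ^ n * (2 * R) ^ n))) := by
    rw [← ENNReal.ofReal_pow (by positivity : (0:ℝ) ≤ 2 * ε),
      ← ENNReal.ofReal_pow (by positivity : (0:ℝ) ≤ 2 * R),
      ← ENNReal.ofReal_mul (by positivity : (0:ℝ) ≤ (2 * ε) ^ n),
      ← ENNReal.ofReal_ofNat,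
      ← ENNReal.ofReal_mul (by norm_num : (0:ℝ) ≤ 2),
      ← ENNReal.ofReal_mul hB]
  have hreal : B * (2 * ((2 * ε) ^ n * (2 * R) ^ n)) =
      2 * A * 8 ^ n * ((1 / 2 : ℝ) ^ n) ^ k := by
    rw [hBdef, hRdef]
    rw [show (-(2 * n : ℝ)) = ((-(2 * n : ℤ) : ℤ) : ℝ) by push_cast; ring,
      Real.rpow_intCast]
    rw [zpow_neg, show ((2 * n : ℤ)) = ((2 * n : ℕ) : ℤ) by push_cast; ring,
      zpow_natCast]
    rw [show (8:ℝ) ^ n = 2 ^ n * 4 ^ n by rw [← mul_pow]; norm_num]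
    simp only [one_div, inv_pow]
    field_simp
    ring
  calc ENNReal.ofReal B *
        ((hlMaxR f₁ x * (ENNReal.ofReal (2 * ε)) ^ n) *
          (hlMaxR f₂ x * (ENNReal.ofReal (2 * R)) ^ n) +
        (hlMaxR f₁ x * (ENNReal.ofReal (2 * R)) ^ n) *
          (hlMaxR f₂ x * (ENNReal.ofReal (2 * ε)) ^ n))
      = ENNReal.ofReal B *
          (2 * ((ENNReal.ofReal (2 * ε)) ^ n * (ENNReal.ofReal (2 * R)) ^ n)) *
          (hlMaxR f₁ x * hlMaxR f₂ x) := by ring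
    _ = ENNReal.ofReal (2 * A * 8 ^ n * ((1 / 2 : ℝ) ^ n) ^ k) *
          (hlMaxR f₁ x * hlMaxR f₂ x) := by rw [hconst, hreal]

/-- under the bilinear size condition
`|K(x;y₁,y₂)| ≤ A (|x-y₁|+|x-y₂|)^{-2n}`, the truncated region integral
satisfies `A_ε(f₁,f₂)(x) ≤ C(n) A Mf₁(x) Mf₂(x)`. -/
theorem statement12 (n : ℕ) :
    ∃ C : ℝ, 0 < C ∧
      ∀ (A : ℝ) (K : (Fin n → ℝ) → (Fin n → ℝ) → (Fin n → ℝ) → ℝ),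
        (∀ x y₁ y₂ : Fin n → ℝ, (x ≠ y₁ ∨ x ≠ y₂) →
          |K x y₁ y₂| ≤ A * (dist x y₁ + dist x y₂) ^ (-(2 * n : ℝ))) →
        ∀ (f₁ f₂ : (Fin n → ℝ) → ℝ), Measurable f₁ → Measurable f₂ →
          ∀ (ε : ℝ), 0 < ε → ∀ x : Fin n → ℝ,
            truncRegionInt K f₁ f₂ ε x ≤
              ENNReal.ofReal (C * A) * hlMaxR f₁ x * hlMaxR f₂ x := by
  refine ⟨4 * 8 ^ n, by positivity, ?_⟩
  intro A K hK f₁ f₂ hf₁ hf₂ ε hε x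
  rcases Nat.eq_zero_or_pos n with hn | hn
  · -- n = 0 : the region is empty
    subst hn
    have hempty : {y : (Fin 0 → ℝ) × (Fin 0 → ℝ) |
        ε < max (dist x y.1) (dist x y.2) ∧
        min (dist x y.1) (dist x y.2) ≤ ε} = ∅ := by
      ext y
      simp only [mem_setOf_eq, mem_empty_iff_false, iff_false, not_and]
      intro h1 _
      have e1 : x = y.1 := funext fun i => i.elim0
      have e2 : x = y.2 := funext fun i => i.elim0
      rw [← e1, ← e2, dist_self] at h1
      simp at h1
      linarith
    rw [truncRegionInt, hempty, Measure.restrict_empty, lintegral_zero_measure]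
    exact zero_le
  · -- n ≥ 1
    have hA : 0 ≤ A := by
      set y : Fin n → ℝ := fun _ => 1 with hy
      have hxy : (0 : Fin n → ℝ) ≠ y := by
        intro h
        have := congrFun h ⟨0, hn⟩
        simp [hy] at this
      have h := (abs_nonneg _).trans (hK 0 0 y (Or.inr hxy))
      have hd : 0 < dist (0 : Fin n → ℝ) 0 + dist (0 : Fin n → ℝ) y := by
        rw [dist_self, zero_add]
        exact dist_pos.2 hxy
      nlinarith [Real.rpow_pos_of_pos hd (-(2 * n : ℝ))]
    set q : ℝ := (1 / 2 : ℝ) ^ n with hq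
    have hq0 : 0 ≤ q := by positivity
    set S : ℕ → Set ((Fin n → ℝ) × (Fin n → ℝ)) := fun k =>
      {y | 2 ^ k * ε < max (dist x y.1) (dist x y.2) ∧
          max (dist x y.1) (dist x y.2) ≤ 2 ^ (k + 1) * ε ∧
          min (dist x y.1) (dist x y.2) ≤ ε} with hS
    have hsub : {y : (Fin n → ℝ) × (Fin n → ℝ) |
        ε < max (dist x y.1) (dist x y.2) ∧
        min (dist x y.1) (dist x y.2) ≤ ε} ⊆ ⋃ k, S k := by
      rintro y ⟨h1, h2⟩
      obtain ⟨k, hk1, hk2⟩ := exists_dyadic hε h1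
      exact mem_iUnion.2 ⟨k, hk1, hk2, h2⟩
    have hgeo : (∑' k : ℕ, (ENNReal.ofReal q) ^ k) ≤ 2 := by
      rw [ENNReal.tsum_geometric]
      have hq2 : ENNReal.ofReal q ≤ 1 / 2 := by
        have : q ≤ 1 / 2 := by
          have := pow_le_pow_of_le_one (by norm_num : (0:ℝ) ≤ 1/2)
            (by norm_num : (1/2 : ℝ) ≤ 1) hn
          simpa [hq] using this
        refine (ENNReal.ofReal_le_ofReal this).trans ?_
        rw [ENNReal.ofReal_div_of_pos (by norm_num), ENNReal.ofReal_one,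
          ENNReal.ofReal_ofNat]
      have h12 : (1 : ℝ≥0∞) - 1 / 2 ≤ 1 - ENNReal.ofReal q := tsub_le_tsub_left hq2 1
      have : (1 : ℝ≥0∞) - 1 / 2 = 1 / 2 := by
        rw [one_div, ENNReal.one_sub_inv_two]
      rw [this] at h12
      calc (1 - ENNReal.ofReal q)⁻¹ ≤ (1 / 2 : ℝ≥0∞)⁻¹ := ENNReal.inv_le_inv.2 h12
        _ = 2 := by rw [one_div, inv_inv]
    calc truncRegionInt K f₁ f₂ ε x
        ≤ ∫⁻ y in ⋃ k, S k, ENNReal.ofReal (|K x y.1 y.2| * |f₁ y.1| * |f₂ y.2|) :=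
          lintegral_mono_set hsub
      _ ≤ ∑' k : ℕ, ∫⁻ y in S k,
            ENNReal.ofReal (|K x y.1 y.2| * |f₁ y.1| * |f₂ y.2|) :=
          lintegral_iUnion_le _ _
      _ ≤ ∑' k : ℕ, ENNReal.ofReal (2 * A * 8 ^ n * q ^ k) *
            (hlMaxR f₁ x * hlMaxR f₂ x) :=
          ENNReal.tsum_le_tsum fun k => annulus_bound hA K hK f₁ f₂ hf₁ hf₂ hε x k
      _ = ENNReal.ofReal (2 * A * 8 ^ n) * (∑' k : ℕ, (ENNReal.ofReal q) ^ k) *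
            (hlMaxR f₁ x * hlMaxR f₂ x) := by
          rw [ENNReal.tsum_mul_right]
          congr 1
          rw [← ENNReal.tsum_mul_left]
          exact tsum_congr fun k => by
            rw [ENNReal.ofReal_mul (by positivity), ENNReal.ofReal_pow hq0]
      _ ≤ ENNReal.ofReal (2 * A * 8 ^ n) * 2 * (hlMaxR f₁ x * hlMaxR f₂ x) := by
          gcongr
      _ = ENNReal.ofReal (4 * 8 ^ n * A) * hlMaxR f₁ x * hlMaxR f₂ x := by
          rw [← ENNReal.ofReal_ofNat 2, ← ENNReal.ofReal_mul (by positivity),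
            show (2 * A * 8 ^ n * 2 : ℝ) = 4 * 8 ^ n * A by ring, ← mul_assoc]
end
end

section
/- Let $K(x;y_1,\dots,y_m)$ satisfy the size condition $|K(x;y_1,\dots,y_m)|\le A(\sum_{j=1}^m |x-y_j|)^{-mn}$ and the regularity condition: for all $x,x',y_1,\dots,y_m$ with $8|x-x'| < \min_j|x-y_j|$ and all $D$ with $2|x-x'|<D$ and $4D<\min_j|x-y_j|$, $|K(x;\vec y) - K(x';\vec y)| \le A\, D^\gamma (\sum_j|x-y_j|)^{-mn-\gamma}$ for some $\gamma>0$. Then for any ball $B = B(x_0,r)$, any $x,x'\in B(x_0, r/8)$, and any functions $f_1,\dots,f_m$ supported outside $B$, $|\int K(x;\vec y)\prod f_j(y_j)d\vec y - \int K(x';\vec y)\prod f_j(y_j)d\vec y| \le C(n,m,\gamma) A \prod_{j=1}^m Mf_j(x_0)$. -/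
open MeasureTheory ENNReal Set

noncomputable section

lemma lintegral_pi_prod_aux {δ : Type*} [Fintype δ] [DecidableEq δ] {π : δ → Type*}
    [∀ i, MeasurableSpace (π i)] (μ : ∀ i, Measure (π i)) [∀ i, SigmaFinite (μ i)]
    (g : ∀ i, π i → ℝ≥0∞) (hg : ∀ i, Measurable (g i)) (x₀ : ∀ i, π i) :
    ∫⁻ x, ∏ i, g i (x i) ∂Measure.pi μ = ∏ i, ∫⁻ t, g i t ∂μ i := by
  have hF : Measurable fun y : ∀ i, π i => ∏ i, g i (y i) :=
    Finset.measurable_prod _ fun i _ => (hg i).comp (measurable_pi_apply i)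
  have key : ∀ s : Finset δ, ∀ x : ∀ i, π i,
      (∫⋯∫⁻_s, (fun y => ∏ i, g i (y i)) ∂μ) x
        = (∏ i ∈ s, ∫⁻ t, g i t ∂μ i) * ∏ i ∈ sᶜ, g i (x i) := by
    intro s
    induction s using Finset.induction_on with
    | empty => intro x; simp
    | @insert i s hi ih =>
      intro x
      rw [MeasureTheory.lmarginal_insert _ hF hi]
      have hicompl : i ∈ sᶜ := Finset.mem_compl.2 hi
      have step : ∀ xᵢ : π i,
          (∫⋯∫⁻_s, (fun y => ∏ j, g j (y j)) ∂μ) (Function.update x i xᵢ)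
            = ((∏ j ∈ s, ∫⁻ t, g j t ∂μ j) * ∏ j ∈ sᶜ.erase i, g j (x j)) * g i xᵢ := by
        intro xᵢ
        rw [ih]
        rw [← Finset.mul_prod_erase _ _ hicompl]
        have : ∀ j ∈ sᶜ.erase i, g j (Function.update x i xᵢ j) = g j (x j) := by
          intro j hj
          rw [Function.update_of_ne (Finset.ne_of_mem_erase hj)]
        rw [Finset.prod_congr rfl this, Function.update_self]
        ring
      simp_rw [step]
      rw [lintegral_const_mul _ (hg i), Finset.prod_insert hi, Finset.compl_insert]
      ring
  rw [lintegral_eq_lmarginal_univ x₀, key Finset.univ, Finset.compl_univ, Finset.prod_empty,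
    mul_one]

lemma st13_cube_vol {n : ℕ} (c : Fin n → ℝ) (R : ℝ) :
    volume (cubeSet n c R) = ENNReal.ofReal (2 * R) ^ n := by
  have : cubeSet n c R = Set.pi Set.univ (fun i => Set.Icc (c i - R) (c i + R)) := by
    ext z; simp only [cubeSet, Set.mem_setOf_eq, Set.mem_univ_pi]
  rw [this, volume_pi_pi]
  simp [Real.volume_Icc]
  ring_nf
  rw [ENNReal.ofReal_mul' (by norm_num), mul_pow, ENNReal.ofReal_ofNat]

lemma st13_lintegral_cube_le {n : ℕ} (f : (Fin n → ℝ) → ℝ) (x₀ c : Fin n → ℝ) {R : ℝ}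
    (hR : 0 < R) (hx₀ : x₀ ∈ cubeSet n c R) :
    ∫⁻ z in cubeSet n c R, ENNReal.ofReal |f z| ≤
      ENNReal.ofReal (2 * R) ^ n * hlMaxR f x₀ := by
  have hvol : volume (cubeSet n c R) = ENNReal.ofReal (2 * R) ^ n := st13_cube_vol c R
  have hle : avgE (cubeSet n c R) (fun z => ENNReal.ofReal |f z|) ≤ hlMaxR f x₀ :=
    le_iSup (fun Q : {Q : Set (Fin n → ℝ) // IsCube Q ∧ x₀ ∈ Q} =>
      avgE Q.1 fun y => ENNReal.ofReal |f y|) ⟨cubeSet n c R, ⟨c, R, hR, rfl⟩, hx₀⟩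
  have hvne : ENNReal.ofReal (2 * R) ^ n ≠ 0 := by
    apply pow_ne_zero
    simp only [ne_eq, ENNReal.ofReal_eq_zero, not_le]
    linarith
  have hvnt : ENNReal.ofReal (2 * R) ^ n ≠ ⊤ := by
    exact pow_ne_top ofReal_ne_top
  unfold avgE at hle
  rw [hvol] at hle
  rw [ENNReal.div_le_iff_le_mul (Or.inl hvne) (Or.inl hvnt)] at hle
  calc ∫⁻ z in cubeSet n c R, ENNReal.ofReal |f z| ≤ hlMaxR f x₀ * ENNReal.ofReal (2 * R) ^ n :=
        hle
    _ = ENNReal.ofReal (2 * R) ^ n * hlMaxR f x₀ := mul_comm _ _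

lemma st13_meas_rpow_dist {n : ℕ} (x₀ : Fin n → ℝ) (e : ℝ) :
    Measurable fun z : Fin n → ℝ => dist x₀ z ^ e := by
  have hd : Measurable fun z : Fin n → ℝ => dist x₀ z := measurable_const.dist measurable_id
  have heq : (fun z : Fin n → ℝ => dist x₀ z ^ e)
      = fun z => if dist x₀ z = 0 then (0:ℝ) ^ e
        else Real.exp (Real.log (dist x₀ z) * e) := by
    funext z
    by_cases h : dist x₀ z = 0
    · simp [h]
    · rw [if_neg h, Real.rpow_def_of_pos (lt_of_le_of_ne dist_nonneg (Ne.symm h))]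
  rw [heq]
  exact Measurable.ite (hd (measurableSet_singleton 0)) measurable_const
    (Real.measurable_exp.comp ((Real.measurable_log.comp hd).mul_const e))

lemma st13_single {n : ℕ} (f : (Fin n → ℝ) → ℝ) (hf : Measurable f)
    (x₀ : Fin n → ℝ) {r δ : ℝ} (hr : 0 < r) (hδ : 0 < δ)
    (hsupp : ∀ z, dist x₀ z < r → f z = 0) :
    ∫⁻ z, ENNReal.ofReal (r ^ δ * dist x₀ z ^ (-(n : ℝ) - δ)) * ENNReal.ofReal |f z| ≤
      ENNReal.ofReal ((4 : ℝ) ^ n * (1 - 2 ^ (-δ))⁻¹) * hlMaxR f x₀ := by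
  set g : (Fin n → ℝ) → ℝ≥0∞ :=
    fun z => ENNReal.ofReal (r ^ δ * dist x₀ z ^ (-(n : ℝ) - δ)) * ENNReal.ofReal |f z| with hg
  set Ann : ℕ → Set (Fin n → ℝ) :=
    fun k => {z | 2 ^ k * r ≤ dist x₀ z ∧ dist x₀ z < 2 ^ (k + 1) * r} with hAnn
  have hAnnMeas : ∀ k, MeasurableSet (Ann k) := by
    intro k
    have h1 : Measurable fun z : Fin n → ℝ => dist x₀ z := measurable_const.dist measurable_id
    exact (h1 measurableSet_Ici).inter (h1 measurableSet_Iio)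
  have hgMeas : Measurable g := by
    have h1 : Measurable fun z : Fin n → ℝ => dist x₀ z := measurable_const.dist measurable_id
    exact ((measurable_const.mul (st13_meas_rpow_dist x₀ _)).ennreal_ofReal).mul
      (hf.abs.ennreal_ofReal)
  -- step: g ≤ indicator of union
  have hsub : ∀ z, g z ≤ (⋃ k, Ann k).indicator g z := by
    intro z
    by_cases hz : z ∈ ⋃ k, Ann k
    · rw [Set.indicator_of_mem hz]
    · rw [Set.indicator_of_notMem hz]
      by_cases hd : dist x₀ z < r
      · simp [hg, hsupp z hd]
      · exfalso
        push_neg at hd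
        have h1 : (1 : ℝ) ≤ dist x₀ z / r := (one_le_div hr).2 hd
        obtain ⟨k, hk1, hk2⟩ := exists_nat_pow_near h1 (one_lt_two (α := ℝ))
        exact hz (Set.mem_iUnion.2 ⟨k, (le_div_iff₀ hr).1 hk1, (div_lt_iff₀ hr).1 hk2⟩)
  calc ∫⁻ z, g z ≤ ∫⁻ z, (⋃ k, Ann k).indicator g z := lintegral_mono hsub
    _ = ∫⁻ z in ⋃ k, Ann k, g z := lintegral_indicator (MeasurableSet.iUnion hAnnMeas) g
    _ ≤ ∑' k, ∫⁻ z in Ann k, g z := lintegral_iUnion_le _ _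
    _ ≤ ∑' k, ENNReal.ofReal ((4:ℝ) ^ n) * ENNReal.ofReal ((2:ℝ) ^ (-δ)) ^ k * hlMaxR f x₀ := by
        apply ENNReal.tsum_le_tsum
        intro k
        have hak : (0:ℝ) < 2 ^ k * r := by positivity
        have hbk : (0:ℝ) < 2 ^ (k+1) * r := by positivity
        -- pointwise bound on the annulus
        have hptw : ∀ z ∈ Ann k, g z ≤
            ENNReal.ofReal (r ^ δ * (2 ^ k * r) ^ (-(n : ℝ) - δ)) * ENNReal.ofReal |f z| := by
          intro z hz
          apply mul_le_mul_left
          apply ENNReal.ofReal_le_ofReal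
          apply mul_le_mul_of_nonneg_left _ (Real.rpow_nonneg hr.le δ)
          have hexp : -(n:ℝ) - δ ≤ 0 := by
            have : (0:ℝ) ≤ (n:ℝ) := Nat.cast_nonneg n
            linarith
          exact Real.rpow_le_rpow_of_nonpos hak hz.1 hexp
        calc ∫⁻ z in Ann k, g z
            ≤ ∫⁻ z in Ann k, ENNReal.ofReal (r ^ δ * (2 ^ k * r) ^ (-(n : ℝ) - δ)) *
              ENNReal.ofReal |f z| := setLIntegral_mono (measurable_const.mul
                hf.abs.ennreal_ofReal) hptw
          _ = ENNReal.ofReal (r ^ δ * (2 ^ k * r) ^ (-(n : ℝ) - δ)) *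
              ∫⁻ z in Ann k, ENNReal.ofReal |f z| := lintegral_const_mul' _ _ ofReal_ne_top
          _ ≤ ENNReal.ofReal (r ^ δ * (2 ^ k * r) ^ (-(n : ℝ) - δ)) *
              (ENNReal.ofReal (2 * (2 ^ (k+1) * r)) ^ n * hlMaxR f x₀) := by
              apply mul_le_mul_right
              have hss : Ann k ⊆ cubeSet n x₀ (2 ^ (k+1) * r) := by
                intro z hz i
                have := dist_le_pi_dist z x₀ i
                rw [Real.dist_eq] at this
                have h2 : |z i - x₀ i| ≤ 2 ^ (k+1) * r := by
                  calc |z i - x₀ i| ≤ dist z x₀ := this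
                    _ = dist x₀ z := dist_comm _ _
                    _ ≤ 2 ^ (k+1) * r := hz.2.le
                obtain ⟨h3, h4⟩ := abs_le.1 h2
                constructor <;> linarith
              calc ∫⁻ z in Ann k, ENNReal.ofReal |f z|
                  ≤ ∫⁻ z in cubeSet n x₀ (2 ^ (k+1) * r), ENNReal.ofReal |f z| :=
                    lintegral_mono_set hss
                _ ≤ ENNReal.ofReal (2 * (2 ^ (k+1) * r)) ^ n * hlMaxR f x₀ :=
                    st13_lintegral_cube_le f x₀ x₀ hbk (fun i => by
                      constructor <;> simp <;> nlinarith)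
          _ ≤ ENNReal.ofReal ((4:ℝ) ^ n) * ENNReal.ofReal ((2:ℝ) ^ (-δ)) ^ k * hlMaxR f x₀ := by
              rw [← mul_assoc]
              apply mul_le_mul_left
              -- real identity
              have hid : r ^ δ * (2 ^ k * r) ^ (-(n : ℝ) - δ) * (2 * (2 ^ (k+1) * r)) ^ n
                  = (4:ℝ) ^ n * ((2:ℝ) ^ (-δ)) ^ k := by
                have ha : (0:ℝ) < 2 ^ k * r := hak
                have h41 : (2 * (2 ^ (k+1) * r)) = 4 * (2 ^ k * r) := by ring
                rw [h41, mul_pow]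
                have h5 : ((2:ℝ) ^ k * r) ^ (-(n : ℝ) - δ)
                    = ((2:ℝ) ^ k * r) ^ (-(n:ℝ)) * ((2:ℝ) ^ k * r) ^ (-δ) := by
                  rw [← Real.rpow_add ha]; ring_nf
                have h6 : ((2:ℝ) ^ k * r) ^ (-(n:ℝ)) * ((2:ℝ) ^ k * r) ^ (n:ℕ) = 1 := by
                  rw [← Real.rpow_natCast (2 ^ k * r) n, ← Real.rpow_add ha]
                  simp
                have h7 : ((2:ℝ) ^ k * r) ^ (-δ) = ((2:ℝ)^(-δ))^k * r ^ (-δ) := by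
                  rw [Real.mul_rpow (by positivity) hr.le]
                  congr 1
                  rw [← Real.rpow_natCast (2:ℝ) k, ← Real.rpow_mul (by norm_num : (0:ℝ) ≤ 2),
                    mul_comm, Real.rpow_mul (by norm_num : (0:ℝ) ≤ 2), Real.rpow_natCast]
                have h8 : r ^ δ * r ^ (-δ) = 1 := by
                  rw [← Real.rpow_add hr]; simp
                calc r ^ δ * (((2:ℝ) ^ k * r) ^ (-(n : ℝ) - δ)) * ((4:ℝ)^n * ((2:ℝ)^k * r)^n)
                    = (4:ℝ)^n * ((2:ℝ)^(-δ))^k * ((((2:ℝ) ^ k * r) ^ (-(n:ℝ))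
                      * ((2:ℝ) ^ k * r) ^ (n:ℕ)) * (r ^ δ * r ^ (-δ))) := by
                      rw [h5, h7]; ring
                  _ = (4:ℝ) ^ n * ((2:ℝ) ^ (-δ)) ^ k := by rw [h6, h8]; ring
              have h2n : (0:ℝ) ≤ 2 * (2 ^ (k+1) * r) := by positivity
              rw [← ENNReal.ofReal_pow h2n, ← ENNReal.ofReal_mul
                (by positivity), hid, ENNReal.ofReal_mul (by positivity : (0:ℝ) ≤ (4:ℝ)^n)]
              rw [ENNReal.ofReal_pow (by positivity : (0:ℝ) ≤ (2:ℝ) ^ (-δ))]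
    _ = ENNReal.ofReal ((4:ℝ) ^ n) * ((1 - ENNReal.ofReal ((2:ℝ) ^ (-δ)))⁻¹ * hlMaxR f x₀) := by
        simp only [mul_assoc]
        rw [ENNReal.tsum_mul_left, ENNReal.tsum_mul_right, ENNReal.tsum_geometric]
    _ ≤ ENNReal.ofReal ((4 : ℝ) ^ n * (1 - 2 ^ (-δ))⁻¹) * hlMaxR f x₀ := by
        have ha1 : (2:ℝ) ^ (-δ) < 1 :=
          Real.rpow_lt_one_of_one_lt_of_neg one_lt_two (by linarith)
        have ha0 : (0:ℝ) ≤ (2:ℝ) ^ (-δ) := by positivity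
        have h1 : (1:ℝ≥0∞) - ENNReal.ofReal ((2:ℝ) ^ (-δ))
            = ENNReal.ofReal (1 - (2:ℝ) ^ (-δ)) := by
          rw [ENNReal.ofReal_sub 1 ha0, ENNReal.ofReal_one]
        rw [h1, ← ENNReal.ofReal_inv_of_pos (by linarith), ← mul_assoc,
          ← ENNReal.ofReal_mul (by positivity)]

set_option maxHeartbeats 1000000 in
lemma st13_pointwise {n m : ℕ} (hn : 1 ≤ n) (hm : 1 ≤ m) {γ : ℝ} (hγ : 0 < γ)
    {A : ℝ} (hA : 0 ≤ A) {K : (Fin n → ℝ) → (Fin m → Fin n → ℝ) → ℝ}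
    (hsize : ∀ (x : Fin n → ℝ) (y : Fin m → Fin n → ℝ), (∃ j, x ≠ y j) →
      |K x y| ≤ A * (∑ j, dist x (y j)) ^ (-(m * n : ℝ)))
    (hreg : ∀ (x x' : Fin n → ℝ) (y : Fin m → Fin n → ℝ) (D : ℝ),
      (∀ j, 8 * dist x x' < dist x (y j)) → 2 * dist x x' < D →
      (∀ j, 4 * D < dist x (y j)) →
      |K x y - K x' y| ≤ A * D ^ γ * (∑ j, dist x (y j)) ^ (-(m * n : ℝ) - γ))
    {x₀ x x' : Fin n → ℝ} {r : ℝ} (hr : 0 < r)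
    (hx : dist x x₀ < r / 8) (hx' : dist x' x₀ < r / 8)
    {y : Fin m → Fin n → ℝ} (hy : ∀ j, r ≤ dist x₀ (y j)) :
    |K x y - K x' y| ≤
      ((8/7 : ℝ) ^ ((m : ℝ) * n + γ) +
        2 * 5 ^ ((n : ℝ) + min γ n / m) * (8/7 : ℝ) ^ ((m : ℝ) * n)) * A *
        ∏ j, (r ^ (min γ (n:ℝ) / m) * dist x₀ (y j) ^ (-(n : ℝ) - min γ (n:ℝ) / m)) := by
  have hmR : (1:ℝ) ≤ m := by exact_mod_cast hm
  have hnR : (1:ℝ) ≤ n := by exact_mod_cast hn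
  set ε : ℝ := min γ (n:ℝ) with hε
  set δ : ℝ := ε / m with hδ
  set P : ℝ := (m : ℝ) * n with hP
  set ν : ℝ := (n : ℝ) + δ with hν
  have hεpos : 0 < ε := lt_min hγ (by linarith)
  have hεγ : ε ≤ γ := min_le_left _ _
  have hεn : ε ≤ (n:ℝ) := min_le_right _ _
  have hδpos : 0 < δ := div_pos hεpos (by linarith)
  have hδm : δ * m = ε := by
    rw [hδ]; field_simp
  have hνpos : 0 < ν := by simp only [hν]; linarith
  have hPpos : 0 < P := by rw [hP]; exact mul_pos (by linarith) (by linarith)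
  set s : Fin m → ℝ := fun j => dist x₀ (y j) with hs
  set σ : ℝ := ∑ j, s j with hσ
  have hspos : ∀ j, 0 < s j := fun j => lt_of_lt_of_le hr (hy j)
  have hsσ : ∀ j, s j ≤ σ :=
    fun j => Finset.single_le_sum (fun i _ => (hspos i).le) (Finset.mem_univ j)
  have j0 : Fin m := ⟨0, hm⟩
  have hσpos : 0 < σ := lt_of_lt_of_le (hspos j0) (hsσ j0)
  have hrσ : r ≤ σ := le_trans (hy j0) (hsσ j0)
  have hxx₀ : dist x₀ x < r / 8 := by rw [dist_comm]; exact hx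
  have hx'x₀ : dist x₀ x' < r / 8 := by rw [dist_comm]; exact hx'
  have hd_lb : ∀ j, 7/8 * s j ≤ dist x (y j) := by
    intro j
    have h1 : dist x₀ (y j) ≤ dist x₀ x + dist x (y j) := dist_triangle _ _ _
    have h3 : r ≤ s j := hy j
    have h4 : s j = dist x₀ (y j) := rfl
    linarith
  have hd'_lb : ∀ j, 7/8 * s j ≤ dist x' (y j) := by
    intro j
    have h1 : dist x₀ (y j) ≤ dist x₀ x' + dist x' (y j) := dist_triangle _ _ _
    have h3 : r ≤ s j := hy j
    have h4 : s j = dist x₀ (y j) := rfl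
    linarith
  set T : ℝ := ∑ j, dist x (y j) with hT
  set T' : ℝ := ∑ j, dist x' (y j) with hT'
  have hT_lb : 7/8 * σ ≤ T := by
    rw [hT, hσ, Finset.mul_sum]
    exact Finset.sum_le_sum fun j _ => hd_lb j
  have hT'_lb : 7/8 * σ ≤ T' := by
    rw [hT', hσ, Finset.mul_sum]
    exact Finset.sum_le_sum fun j _ => hd'_lb j
  have hTpos : 0 < T := lt_of_lt_of_le (by linarith) hT_lb
  have hT'pos : 0 < T' := lt_of_lt_of_le (by linarith) hT'_lb
  set Pd : ℝ := ∏ j, s j ^ ν with hPd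
  have hPdpos : 0 < Pd :=
    Finset.prod_pos fun j _ => Real.rpow_pos_of_pos (hspos j) _
  -- rewrite RHS product
  have hnegexp : ∀ j, s j ^ (-(n:ℝ) - δ) = (s j ^ ν)⁻¹ := by
    intro j
    rw [show -(n:ℝ) - δ = -ν by rw [hν]; ring, Real.rpow_neg (hspos j).le]
  have hprodRHS : (∏ j, (r ^ δ * s j ^ (-(n : ℝ) - δ))) = r ^ ε * Pd⁻¹ := by
    rw [Finset.prod_mul_distrib, Finset.prod_const, Finset.card_univ, Fintype.card_fin,
      ← Real.rpow_natCast (r ^ δ) m, ← Real.rpow_mul hr.le, hδm]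
    congr 1
    rw [hPd, ← Finset.prod_inv_distrib]
    exact Finset.prod_congr rfl fun j _ => hnegexp j
  have hPdσ : Pd ≤ σ ^ (P + ε) := by
    have h1 : Pd ≤ ∏ _j : Fin m, σ ^ ν := by
      apply Finset.prod_le_prod (fun j _ => (Real.rpow_pos_of_pos (hspos j) _).le)
      intro j _
      exact Real.rpow_le_rpow (hspos j).le (hsσ j) hνpos.le
    have h2 : (∏ _j : Fin m, σ ^ ν) = σ ^ (ν * m) := by
      rw [Finset.prod_const, Finset.card_univ, Fintype.card_fin,
        ← Real.rpow_natCast (σ ^ ν) m, ← Real.rpow_mul hσpos.le]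
    have h3 : ν * m = P + ε := by
      rw [hν, hP, ← hδm]; ring
    rw [h2, h3] at h1
    exact h1
  rw [hprodRHS]
  by_cases hfar : ∀ j, 4 * r < dist x (y j)
  · -- far case: use regularity with D = r
    have hxx' : dist x x' < r / 4 := by
      have := dist_triangle x x₀ x'
      have h2 : dist x₀ x' < r / 8 := hx'x₀
      linarith
    have h8 : ∀ j, 8 * dist x x' < dist x (y j) := by
      intro j
      have := hfar j
      linarith
    have hkey := hreg x x' y r h8 (by linarith) hfar
    rw [← hT] at hkey
    -- T ^ (-P - γ) = (T ^ (P + γ))⁻¹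
    have hTP : T ^ (-((m:ℝ) * n) - γ) = (T ^ (P + γ))⁻¹ := by
      rw [show -((m:ℝ) * n) - γ = -(P + γ) by rw [hP]; ring, Real.rpow_neg hTpos.le]
    rw [hTP] at hkey
    have hcross : r ^ γ * Pd ≤ (8/7 : ℝ) ^ (P + γ) * r ^ ε * T ^ (P + γ) := by
      have stepA : r ^ γ * Pd ≤ r ^ γ * σ ^ (P + ε) := by
        apply mul_le_mul_of_nonneg_left hPdσ (Real.rpow_nonneg hr.le γ)
      have stepB : r ^ γ * σ ^ (P + ε) ≤ r ^ ε * σ ^ (P + γ) := by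
        have h1 : r ^ γ = r ^ ε * r ^ (γ - ε) := by
          rw [← Real.rpow_add hr]; ring_nf
        have h2 : r ^ (γ - ε) ≤ σ ^ (γ - ε) :=
          Real.rpow_le_rpow hr.le hrσ (by linarith)
        have h3 : σ ^ (P + ε) * σ ^ (γ - ε) = σ ^ (P + γ) := by
          rw [← Real.rpow_add hσpos]; ring_nf
        calc r ^ γ * σ ^ (P + ε) = r ^ ε * (r ^ (γ - ε) * σ ^ (P + ε)) := by rw [h1]; ring
          _ ≤ r ^ ε * (σ ^ (γ - ε) * σ ^ (P + ε)) := by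
              apply mul_le_mul_of_nonneg_left _ (Real.rpow_nonneg hr.le ε)
              apply mul_le_mul_of_nonneg_right h2 (Real.rpow_nonneg hσpos.le _)
          _ = r ^ ε * σ ^ (P + γ) := by rw [mul_comm (σ ^ (γ - ε)), h3]
      have stepC : σ ^ (P + γ) ≤ (8/7 : ℝ) ^ (P + γ) * T ^ (P + γ) := by
        have h1 : σ ≤ 8/7 * T := by linarith
        calc σ ^ (P + γ) ≤ (8/7 * T) ^ (P + γ) :=
              Real.rpow_le_rpow hσpos.le h1 (by linarith)
          _ = (8/7 : ℝ) ^ (P + γ) * T ^ (P + γ) :=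
              Real.mul_rpow (by norm_num) hTpos.le
      calc r ^ γ * Pd ≤ r ^ γ * σ ^ (P + ε) := stepA
        _ ≤ r ^ ε * σ ^ (P + γ) := stepB
        _ ≤ r ^ ε * ((8/7 : ℝ) ^ (P + γ) * T ^ (P + γ)) := by
            apply mul_le_mul_of_nonneg_left stepC (Real.rpow_nonneg hr.le ε)
        _ = (8/7 : ℝ) ^ (P + γ) * r ^ ε * T ^ (P + γ) := by ring
    have hmain : r ^ γ * (T ^ (P + γ))⁻¹ ≤ (8/7 : ℝ) ^ (P + γ) * (r ^ ε * Pd⁻¹) := by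
      rw [show (8/7:ℝ) ^ (P + γ) * (r ^ ε * Pd⁻¹) = ((8/7:ℝ) ^ (P + γ) * r ^ ε) / Pd by ring,
        show r ^ γ * (T ^ (P + γ))⁻¹ = r ^ γ / T ^ (P + γ) by ring,
        div_le_div_iff₀ (Real.rpow_pos_of_pos hTpos _) hPdpos]
      calc r ^ γ * Pd ≤ (8/7 : ℝ) ^ (P + γ) * r ^ ε * T ^ (P + γ) := hcross
        _ = (8/7:ℝ) ^ (P + γ) * r ^ ε * T ^ (P + γ) := by ring
    have e1 : (0:ℝ) ≤ 2 * 5 ^ ν * (8/7:ℝ) ^ P := by positivity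
    have e2 : (0:ℝ) ≤ r ^ ε * Pd⁻¹ :=
      mul_nonneg (Real.rpow_nonneg hr.le ε) (inv_nonneg.mpr hPdpos.le)
    calc |K x y - K x' y| ≤ A * r ^ γ * (T ^ (P + γ))⁻¹ := hkey
      _ = A * (r ^ γ * (T ^ (P + γ))⁻¹) := by ring
      _ ≤ A * ((8/7:ℝ) ^ (P + γ) * (r ^ ε * Pd⁻¹)) := mul_le_mul_of_nonneg_left hmain hA
      _ ≤ ((8/7 : ℝ) ^ (P + γ) + 2 * 5 ^ ν * (8/7 : ℝ) ^ P) * A * (r ^ ε * Pd⁻¹) := by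
          have hh : ((8/7 : ℝ) ^ (P + γ) + 2 * 5 ^ ν * (8/7 : ℝ) ^ P) * A * (r ^ ε * Pd⁻¹)
              = A * ((8/7:ℝ) ^ (P + γ) * (r ^ ε * Pd⁻¹))
                + (2 * 5 ^ ν * (8/7 : ℝ) ^ P) * A * (r ^ ε * Pd⁻¹) := by ring
          rw [hh]
          linarith [mul_nonneg (mul_nonneg e1 hA) e2]
  · -- near case
    push_neg at hfar
    obtain ⟨j₁, hj₁⟩ := hfar
    have hdj0 : (0:ℝ) < dist x (y j0) := lt_of_lt_of_le (by linarith [hspos j0]) (hd_lb j0)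
    have hdj0' : (0:ℝ) < dist x' (y j0) := lt_of_lt_of_le (by linarith [hspos j0]) (hd'_lb j0)
    have hne : ∃ j, x ≠ y j := ⟨j0, fun h => by rw [h] at hdj0; simp at hdj0⟩
    have hne' : ∃ j, x' ≠ y j := ⟨j0, fun h => by rw [h] at hdj0'; simp at hdj0'⟩
    have hk1 := hsize x y hne
    have hk2 := hsize x' y hne'
    rw [← hT] at hk1
    rw [← hT'] at hk2
    have hPneg : -P ≤ 0 := by linarith
    have h78σ : (0:ℝ) < 7/8 * σ := by linarith
    have hb1 : T ^ (-P) ≤ (7/8 * σ) ^ (-P) :=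
      Real.rpow_le_rpow_of_nonpos h78σ hT_lb hPneg
    have hb2 : T' ^ (-P) ≤ (7/8 * σ) ^ (-P) :=
      Real.rpow_le_rpow_of_nonpos h78σ hT'_lb hPneg
    have h78' : ((7:ℝ)/8) ^ (-P) = (8/7:ℝ) ^ P := by
      rw [Real.rpow_neg (by norm_num : (0:ℝ) ≤ 7/8),
        show ((8:ℝ)/7) = ((7:ℝ)/8)⁻¹ by norm_num,
        Real.inv_rpow (by norm_num : (0:ℝ) ≤ 7/8)]
    have h78 : ((7:ℝ)/8 * σ) ^ (-P) = (8/7:ℝ) ^ P * σ ^ (-P) := by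
      rw [Real.mul_rpow (by norm_num) hσpos.le, h78']
    have hsj5r : s j₁ ≤ 5 * r := by
      have h1 : dist x₀ (y j₁) ≤ dist x₀ x + dist x (y j₁) := dist_triangle _ _ _
      have h2 : s j₁ = dist x₀ (y j₁) := rfl
      linarith
    have hPdnear : Pd ≤ 5 ^ ν * r ^ ε * σ ^ P := by
      have hsplit : s j₁ ^ ν * ∏ j ∈ Finset.univ.erase j₁, s j ^ ν = Pd := by
        rw [hPd]
        exact Finset.mul_prod_erase Finset.univ (fun j => s j ^ ν) (Finset.mem_univ j₁)
      have h1 : s j₁ ^ ν ≤ (5 * r) ^ ν := Real.rpow_le_rpow (hspos j₁).le hsj5r hνpos.le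
      have h2 : (∏ j ∈ Finset.univ.erase j₁, s j ^ ν) ≤ σ ^ (ν * ((m:ℝ) - 1)) := by
        have h3 : (∏ j ∈ Finset.univ.erase j₁, s j ^ ν)
            ≤ ∏ _j ∈ Finset.univ.erase j₁, σ ^ ν :=
          Finset.prod_le_prod (fun j _ => (Real.rpow_pos_of_pos (hspos j) ν).le)
            (fun j _ => Real.rpow_le_rpow (hspos j).le (hsσ j) hνpos.le)
        have h4 : (∏ _j ∈ Finset.univ.erase j₁, σ ^ ν) = σ ^ (ν * ((m:ℝ) - 1)) := by
          rw [Finset.prod_const, Finset.card_erase_of_mem (Finset.mem_univ j₁),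
            Finset.card_univ, Fintype.card_fin,
            ← Real.rpow_natCast (σ ^ ν) (m - 1), ← Real.rpow_mul hσpos.le,
            Nat.cast_sub hm, Nat.cast_one]
        rw [h4] at h3; exact h3
      have h5 : ((5:ℝ) * r) ^ ν = 5 ^ ν * r ^ ν := Real.mul_rpow (by norm_num) hr.le
      have h6 : r ^ ν ≤ r ^ ε * σ ^ (ν - ε) := by
        have h61 : r ^ ν = r ^ ε * r ^ (ν - ε) := by rw [← Real.rpow_add hr]; ring_nf
        rw [h61]
        apply mul_le_mul_of_nonneg_left
          (Real.rpow_le_rpow hr.le hrσ (by simp only [hν]; linarith))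
          (Real.rpow_nonneg hr.le ε)
      have hνm : ν * (m:ℝ) = P + ε := by
        simp only [hν, hP]; rw [← hδm]; ring
      have h7 : σ ^ (ν - ε) * σ ^ (ν * ((m:ℝ) - 1)) = σ ^ P := by
        rw [← Real.rpow_add hσpos]
        congr 1
        linear_combination hνm
      calc Pd = s j₁ ^ ν * ∏ j ∈ Finset.univ.erase j₁, s j ^ ν := hsplit.symm
        _ ≤ (5*r) ^ ν * σ ^ (ν * ((m:ℝ) - 1)) :=
            mul_le_mul h1 h2
              (Finset.prod_nonneg fun j _ => (Real.rpow_pos_of_pos (hspos j) ν).le)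
              (Real.rpow_nonneg (by positivity) ν)
        _ = 5 ^ ν * r ^ ν * σ ^ (ν * ((m:ℝ) - 1)) := by rw [h5]
        _ ≤ 5 ^ ν * (r ^ ε * σ ^ (ν - ε)) * σ ^ (ν * ((m:ℝ) - 1)) := by
            have h50 : (0:ℝ) ≤ (5:ℝ) ^ ν := Real.rpow_nonneg (by norm_num) ν
            have h51 : (0:ℝ) ≤ σ ^ (ν * ((m:ℝ) - 1)) := Real.rpow_nonneg hσpos.le _
            exact mul_le_mul_of_nonneg_right (mul_le_mul_of_nonneg_left h6 h50) h51
        _ = 5 ^ ν * r ^ ε * (σ ^ (ν - ε) * σ ^ (ν * ((m:ℝ) - 1))) := by ring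
        _ = 5 ^ ν * r ^ ε * σ ^ P := by rw [h7]
    have hσP : σ ^ (-P) = (σ ^ P)⁻¹ := Real.rpow_neg hσpos.le P
    have hmain : (8/7:ℝ) ^ P * σ ^ (-P) ≤ 5 ^ ν * (8/7:ℝ) ^ P * (r ^ ε * Pd⁻¹) := by
      rw [hσP,
        show (8/7:ℝ) ^ P * (σ ^ P)⁻¹ = (8/7:ℝ) ^ P / σ ^ P by ring,
        show (5:ℝ) ^ ν * (8/7:ℝ) ^ P * (r ^ ε * Pd⁻¹)
          = ((5:ℝ) ^ ν * (8/7:ℝ) ^ P * r ^ ε) / Pd by ring,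
        div_le_div_iff₀ (Real.rpow_pos_of_pos hσpos P) hPdpos]
      have h87 : (0:ℝ) ≤ (8/7:ℝ) ^ P := Real.rpow_nonneg (by norm_num) P
      have hstep := mul_le_mul_of_nonneg_left hPdnear h87
      linarith [hstep]
    have habs : |K x y - K x' y| ≤ A * T ^ (-P) + A * T' ^ (-P) :=
      le_trans (abs_sub _ _) (add_le_add hk1 hk2)
    have e2 : (0:ℝ) ≤ r ^ ε * Pd⁻¹ :=
      mul_nonneg (Real.rpow_nonneg hr.le ε) (inv_nonneg.mpr hPdpos.le)
    have e3 : (0:ℝ) ≤ (8/7:ℝ) ^ (P + γ) := Real.rpow_nonneg (by norm_num) _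
    calc |K x y - K x' y| ≤ A * T ^ (-P) + A * T' ^ (-P) := habs
      _ ≤ A * ((7/8 * σ) ^ (-P)) + A * ((7/8 * σ) ^ (-P)) :=
          add_le_add (mul_le_mul_of_nonneg_left hb1 hA) (mul_le_mul_of_nonneg_left hb2 hA)
      _ = 2 * A * ((8/7:ℝ) ^ P * σ ^ (-P)) := by rw [h78]; ring
      _ ≤ 2 * A * (5 ^ ν * (8/7:ℝ) ^ P * (r ^ ε * Pd⁻¹)) := by
          apply mul_le_mul_of_nonneg_left hmain (by linarith)
      _ = (2 * 5 ^ ν * (8/7:ℝ) ^ P) * A * (r ^ ε * Pd⁻¹) := by ring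
      _ ≤ ((8/7 : ℝ) ^ (P + γ) + 2 * 5 ^ ν * (8/7 : ℝ) ^ P) * A * (r ^ ε * Pd⁻¹) := by
          have hh : ((8/7 : ℝ) ^ (P + γ) + 2 * 5 ^ ν * (8/7 : ℝ) ^ P) * A * (r ^ ε * Pd⁻¹)
              = (8/7:ℝ) ^ (P + γ) * A * (r ^ ε * Pd⁻¹)
                + (2 * 5 ^ ν * (8/7 : ℝ) ^ P) * A * (r ^ ε * Pd⁻¹) := by ring
          rw [hh]
          linarith [mul_nonneg (mul_nonneg e3 hA) e2]

set_option maxHeartbeats 1000000 in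
/-- size plus the regularity condition (1.11) imply a
Hörmander-type pointwise bound for differences of the kernel integral against
functions supported outside a ball. -/
theorem statement13 (n m : ℕ) (hm : 1 ≤ m) (γ : ℝ) (hγ : 0 < γ) :
    ∃ C : ℝ, 0 < C ∧
      ∀ (A : ℝ) (K : (Fin n → ℝ) → (Fin m → Fin n → ℝ) → ℝ),
        (∀ (x : Fin n → ℝ) (y : Fin m → Fin n → ℝ), (∃ j, x ≠ y j) →
          |K x y| ≤ A * (∑ j, dist x (y j)) ^ (-(m * n : ℝ))) →
        (∀ (x x' : Fin n → ℝ) (y : Fin m → Fin n → ℝ) (D : ℝ),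
          (∀ j, 8 * dist x x' < dist x (y j)) →
          2 * dist x x' < D → (∀ j, 4 * D < dist x (y j)) →
          |K x y - K x' y| ≤
            A * D ^ γ * (∑ j, dist x (y j)) ^ (-(m * n : ℝ) - γ)) →
        ∀ (x₀ : Fin n → ℝ) (r : ℝ), 0 < r →
          ∀ x x' : Fin n → ℝ, x ∈ Metric.ball x₀ (r / 8) →
            x' ∈ Metric.ball x₀ (r / 8) →
            ∀ f : Fin m → (Fin n → ℝ) → ℝ, (∀ j, Measurable (f j)) →
              (∀ j, Function.support (f j) ⊆ (Metric.ball x₀ r)ᶜ) →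
              Integrable (fun y : Fin m → Fin n → ℝ => K x y * ∏ j, f j (y j)) →
              Integrable (fun y : Fin m → Fin n → ℝ => K x' y * ∏ j, f j (y j)) →
              ENNReal.ofReal
                  |(∫ y : Fin m → Fin n → ℝ, K x y * ∏ j, f j (y j)) -
                    ∫ y : Fin m → Fin n → ℝ, K x' y * ∏ j, f j (y j)| ≤
                ENNReal.ofReal (C * A) * ∏ j, hlMaxR (f j) x₀ := by
  rcases Nat.eq_zero_or_pos n with hn0 | hn
  · subst hn0
    refine ⟨1, one_pos, ?_⟩
    intro A K hsize hreg x₀ r hr x x' hx hx' f hfm hfs hInt hInt'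
    have hxx : x = x' := funext fun i => i.elim0
    rw [hxx, sub_self, abs_zero, ENNReal.ofReal_zero]
    positivity
  · have hnR : (1:ℝ) ≤ n := by exact_mod_cast hn
    have hmR : (1:ℝ) ≤ m := by exact_mod_cast hm
    set ε : ℝ := min γ (n:ℝ) with hε
    set δ : ℝ := ε / m with hδ
    have hεpos : 0 < ε := lt_min hγ (by linarith)
    have hδpos : 0 < δ := div_pos hεpos (by linarith)
    set C₁ : ℝ := (8/7 : ℝ) ^ ((m : ℝ) * n + γ) +
      2 * 5 ^ ((n : ℝ) + δ) * (8/7 : ℝ) ^ ((m : ℝ) * n) with hC₁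
    set C₂ : ℝ := (4 : ℝ) ^ n * (1 - 2 ^ (-δ))⁻¹ with hC₂
    have h2δ1 : (2:ℝ) ^ (-δ) < 1 :=
      Real.rpow_lt_one_of_one_lt_of_neg one_lt_two (by linarith)
    have hC₁pos : 0 < C₁ := by rw [hC₁]; positivity
    have hC₂pos : 0 < C₂ := by
      rw [hC₂]
      exact mul_pos (by positivity) (inv_pos.mpr (by linarith))
    refine ⟨C₁ * C₂ ^ m, mul_pos hC₁pos (pow_pos hC₂pos m), ?_⟩
    intro A K hsize hreg x₀ r hr x x' hx hx' f hfm hfs hInt hInt'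
    -- A is nonnegative
    have hA : 0 ≤ A := by
      set y1 : Fin m → Fin n → ℝ := fun _ _ => 1 with hy1
      have hne0 : ∀ j : Fin m, (fun _ => (0:ℝ)) ≠ y1 j := by
        intro j h
        have := congrFun h ⟨0, hn⟩
        norm_num [hy1] at this
      have hb := hsize (fun _ => 0) y1 ⟨⟨0, hm⟩, hne0 ⟨0, hm⟩⟩
      have hpos : 0 < (∑ j, dist (fun _ => (0:ℝ)) (y1 j)) ^ (-(m * n : ℝ)) := by
        apply Real.rpow_pos_of_pos
        apply Finset.sum_pos
        · intro j _
          rw [dist_pos]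
          exact hne0 j
        · exact ⟨⟨0, hm⟩, Finset.mem_univ _⟩
      nlinarith [abs_nonneg (K (fun _ => 0) y1)]
    -- support condition restated
    have hsupp : ∀ j, ∀ z, dist x₀ z < r → f j z = 0 := by
      intro j z hz
      by_contra h
      exact hfs j h (Metric.mem_ball.mpr (by rw [dist_comm]; exact hz))
    -- the auxiliary majorant
    set g : Fin m → (Fin n → ℝ) → ℝ≥0∞ := fun j z =>
      ENNReal.ofReal (r ^ δ * dist x₀ z ^ (-(n:ℝ) - δ)) * ENNReal.ofReal |f j z| with hg
    have hgMeas : ∀ j, Measurable (g j) := by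
      intro j
      exact ((measurable_const.mul (st13_meas_rpow_dist x₀ _)).ennreal_ofReal).mul
        ((hfm j).abs.ennreal_ofReal)
    -- pointwise bound
    have hptw : ∀ yy : Fin m → Fin n → ℝ,
        ENNReal.ofReal |K x yy * ∏ j, f j (yy j) - K x' yy * ∏ j, f j (yy j)|
          ≤ ENNReal.ofReal (C₁ * A) * ∏ j, g j (yy j) := by
      intro yy
      have hfactor : K x yy * ∏ j, f j (yy j) - K x' yy * ∏ j, f j (yy j)
          = (K x yy - K x' yy) * ∏ j, f j (yy j) := by ring
      rw [hfactor]
      by_cases hcase : ∀ j, r ≤ dist x₀ (yy j)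
      · have hpt := st13_pointwise hn hm hγ hA hsize hreg hr
          (Metric.mem_ball.mp hx) (Metric.mem_ball.mp hx') hcase
        rw [← hε, ← hδ, ← hC₁] at hpt
        have habs : |(K x yy - K x' yy) * ∏ j, f j (yy j)|
            = |K x yy - K x' yy| * ∏ j, |f j (yy j)| := by
          rw [abs_mul, Finset.abs_prod]
        rw [habs]
        have hb2 : |K x yy - K x' yy| * ∏ j, |f j (yy j)|
            ≤ (C₁ * A) * ∏ j, (r ^ δ * dist x₀ (yy j) ^ (-(n:ℝ) - δ) * |f j (yy j)|) := by
          rw [Finset.prod_mul_distrib]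
          have hprodnn : (0:ℝ) ≤ ∏ j, |f j (yy j)| :=
            Finset.prod_nonneg fun j _ => abs_nonneg (f j (yy j))
          have h1 := mul_le_mul_of_nonneg_right hpt hprodnn
          calc |K x yy - K x' yy| * ∏ j, |f j (yy j)|
              ≤ C₁ * A * (∏ j, (r ^ δ * dist x₀ (yy j) ^ (-(n:ℝ) - δ))) *
                ∏ j, |f j (yy j)| := h1
            _ = C₁ * A * ((∏ j, (r ^ δ * dist x₀ (yy j) ^ (-(n:ℝ) - δ))) *
                ∏ j, |f j (yy j)|) := by ring
        refine le_trans (ENNReal.ofReal_le_ofReal hb2) ?_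
        have hterm : ∀ j : Fin m,
            (0:ℝ) ≤ r ^ δ * dist x₀ (yy j) ^ (-(n:ℝ) - δ) * |f j (yy j)| := by
          intro j
          have h1 : (0:ℝ) ≤ r ^ δ := Real.rpow_nonneg hr.le δ
          have h2 : (0:ℝ) ≤ dist x₀ (yy j) ^ (-(n:ℝ) - δ) :=
            Real.rpow_nonneg dist_nonneg _
          positivity
        rw [ENNReal.ofReal_mul (mul_nonneg hC₁pos.le hA),
          ENNReal.ofReal_prod_of_nonneg (fun j _ => hterm j)]
        apply le_of_eq
        congr 1
        apply Finset.prod_congr rfl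
        intro j _
        rw [hg]
        rw [ENNReal.ofReal_mul (mul_nonneg (Real.rpow_nonneg hr.le δ)
          (Real.rpow_nonneg dist_nonneg _))]
      · push_neg at hcase
        obtain ⟨j₂, hj₂⟩ := hcase
        have hfz : f j₂ (yy j₂) = 0 := hsupp j₂ (yy j₂) hj₂
        rw [Finset.prod_eq_zero (Finset.mem_univ j₂) hfz, mul_zero, abs_zero,
          ENNReal.ofReal_zero]
        positivity
    have hdiff : (∫ y : Fin m → Fin n → ℝ, K x y * ∏ j, f j (y j)) -
        (∫ y : Fin m → Fin n → ℝ, K x' y * ∏ j, f j (y j))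
        = ∫ y : Fin m → Fin n → ℝ,
            (K x y * ∏ j, f j (y j) - K x' y * ∏ j, f j (y j)) :=
      (integral_sub hInt hInt').symm
    rw [hdiff]
    have hpi := lintegral_pi_prod_aux (fun _ : Fin m => (volume : Measure (Fin n → ℝ)))
      g hgMeas (fun _ _ => 0)
    rw [← MeasureTheory.volume_pi] at hpi
    calc ENNReal.ofReal |∫ y : Fin m → Fin n → ℝ, (K x y * ∏ j, f j (y j) - K x' y * ∏ j, f j (y j))|
        ≤ ∫⁻ y : Fin m → Fin n → ℝ,
            ENNReal.ofReal |K x y * ∏ j, f j (y j) - K x' y * ∏ j, f j (y j)| := by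
          rw [← Real.enorm_eq_ofReal_abs]
          simp_rw [← Real.enorm_eq_ofReal_abs]
          exact enorm_integral_le_lintegral_enorm _
      _ ≤ ∫⁻ y : Fin m → Fin n → ℝ, ENNReal.ofReal (C₁ * A) * ∏ j, g j (y j) :=
          lintegral_mono hptw
      _ = ENNReal.ofReal (C₁ * A) * ∫⁻ y : Fin m → Fin n → ℝ, ∏ j, g j (y j) :=
          lintegral_const_mul' _ _ ofReal_ne_top
      _ = ENNReal.ofReal (C₁ * A) * ∏ j, ∫⁻ z, g j z := by rw [hpi]
      _ ≤ ENNReal.ofReal (C₁ * A) * ∏ j, (ENNReal.ofReal C₂ * hlMaxR (f j) x₀) := by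
          apply mul_le_mul_right
          apply Finset.prod_le_prod'
          intro j _
          exact st13_single (f j) (hfm j) x₀ hr hδpos (hsupp j)
      _ = ENNReal.ofReal (C₁ * C₂ ^ m * A) * ∏ j, hlMaxR (f j) x₀ := by
          rw [Finset.prod_mul_distrib, Finset.prod_const, Finset.card_univ,
            Fintype.card_fin, ← ENNReal.ofReal_pow hC₂pos.le, ← mul_assoc,
            ← ENNReal.ofReal_mul (mul_nonneg hC₁pos.le hA)]
          congr 2
          ring
end
end
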